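/- arXiv:2601.17591 — 3 statements merged into one kernel-verified Lean document; each statement's English description precedes it below -/
import Mathlib

section
/- Let r > 0, t ∈ (0,1), let 𝒳 be a standard Borel space, let I be a finite index set, and for each i ∈ I let κ_i and η_i be Markov kernels from [0, r] to 𝒳 such that for Lebesgue-almost every y ∈ [0, r], κ_i(y) ≠ η_i(y). Define S(γ; t) := ⋃_{i ∈ I} {y ∈ [0, r] : φ_t(κ_i(y), η_i(y)) ≥ 1 − γ}. Then for every ε > 0 there exists γ > 0 such that the Lebesgue measure of S(γ; t) is less than ε. -/
open MeasureTheory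

/-- The Hellinger-type integral `φ_t(P,Q) = ∫ (dP/dQ)^t dQ`. -/
noncomputable def phiT {𝒳 : Type*} [MeasurableSpace 𝒳] (t : ℝ) (P Q : Measure 𝒳) : ℝ :=
  ∫ x, (P.rnDeriv Q x).toReal ^ t ∂Q

lemma phiT_lt_one {𝒳 : Type*} [MeasurableSpace 𝒳] {t : ℝ} (ht : t ∈ Set.Ioo (0:ℝ) 1)
    (P Q : Measure 𝒳) [IsProbabilityMeasure P] [IsProbabilityMeasure Q] (h : P ≠ Q) :
    phiT t P Q < 1 := by
  set f : 𝒳 → ℝ := fun x => (P.rnDeriv Q x).toReal with hf_def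
  have hf_meas : Measurable f := (Measure.measurable_rnDeriv P Q).ennreal_toReal
  have hf_int : Integrable f Q := Measure.integrable_toReal_rnDeriv
  have hf_nonneg : ∀ x, 0 ≤ f x := fun x => ENNReal.toReal_nonneg
  have hbound : ∀ x, f x ^ t ≤ 1 + f x := by
    intro x
    rcases le_or_gt (f x) 1 with hx | hx
    · have := Real.rpow_le_one (hf_nonneg x) hx ht.1.le
      linarith [hf_nonneg x]
    · have : f x ^ t ≤ f x ^ (1:ℝ) :=
        Real.rpow_le_rpow_of_exponent_le hx.le ht.2.le
      rw [Real.rpow_one] at this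
      linarith
  have hgt_int : Integrable (fun x => f x ^ t) Q := by
    refine Integrable.mono' ((integrable_const (1:ℝ)).add hf_int)
      (((Real.continuous_rpow_const ht.1.le).measurable.comp hf_meas).aestronglyMeasurable) ?_
    filter_upwards with x
    rw [Real.norm_of_nonneg (Real.rpow_nonneg (hf_nonneg x) t)]
    exact hbound x
  have hImean : ∫ x, f x ∂Q = 1 - (P.singularPart Q Set.univ).toReal := by
    simpa [measureReal_def] using Measure.integral_toReal_rnDeriv' (μ := P) (ν := Q)
  have hI_le : ∫ x, f x ∂Q ≤ 1 := by
    rw [hImean]; simp [ENNReal.toReal_nonneg]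
  have hI_nonneg : 0 ≤ ∫ x, f x ∂Q := integral_nonneg hf_nonneg
  have hcont : ContinuousOn (fun x : ℝ => x ^ t) (Set.Ici 0) :=
    (Real.continuous_rpow_const ht.1.le).continuousOn
  have hmem : ∀ᵐ x ∂Q, f x ∈ Set.Ici (0:ℝ) :=
    Filter.Eventually.of_forall fun x => hf_nonneg x
  rcases (Real.strictConcaveOn_rpow ht.1 ht.2).ae_eq_const_or_lt_map_average hcont
      isClosed_Ici hmem hf_int hgt_int with hc | hlt
  · -- f is a.e. constant
    rw [average_eq_integral] at hc
    set c : ℝ := ∫ x, f x ∂Q with hc_def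
    have hphi : phiT t P Q = c ^ t := by
      rw [phiT]
      rw [show (fun x => (P.rnDeriv Q x).toReal ^ t) = fun x => f x ^ t from rfl]
      rw [integral_congr_ae (hc.mono fun x hx => by rw [hx])]
      simp
    rcases lt_or_eq_of_le hI_le with hlt1 | heq1
    · rw [hphi]
      exact Real.rpow_lt_one hI_nonneg hlt1 ht.1
    · -- c = 1, derive P = Q, contradiction
      exfalso
      apply h
      have hsing : P.singularPart Q = 0 := by
        have : (P.singularPart Q Set.univ).toReal = 0 := by
          rw [hImean] at heq1; linarith
        have h2 : P.singularPart Q Set.univ = 0 :=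
          (ENNReal.toReal_eq_zero_iff _).mp this |>.resolve_right (measure_ne_top _ _)
        exact Measure.measure_univ_eq_zero.mp h2
      have hrn : P.rnDeriv Q =ᵐ[Q] fun _ => 1 := by
        filter_upwards [hc, P.rnDeriv_lt_top Q] with x hx hx'
        have : f x = 1 := by rw [hx]; simpa [hc_def] using heq1
        rw [hf_def] at this
        simpa using (ENNReal.toReal_eq_one_iff _).mp (by simpa using this)
      calc P = P.singularPart Q + Q.withDensity (P.rnDeriv Q) :=
            (P.haveLebesgueDecomposition_add Q)
        _ = Q.withDensity (P.rnDeriv Q) := by rw [hsing, zero_add]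
        _ = Q.withDensity (fun _ => 1) := withDensity_congr_ae hrn
        _ = Q := by simp
  · rw [average_eq_integral, average_eq_integral] at hlt
    calc phiT t P Q = ∫ x, f x ^ t ∂Q := rfl
      _ < (∫ x, f x ∂Q) ^ t := hlt
      _ ≤ 1 := Real.rpow_le_one hI_nonneg hI_le ht.1.le

lemma measurable_phiT {𝒳 : Type*} [MeasurableSpace 𝒳] [StandardBorelSpace 𝒳] {t : ℝ} (htt : 0 ≤ t)
    (κ η : ProbabilityTheory.Kernel ℝ 𝒳)
    [ProbabilityTheory.IsFiniteKernel κ] [ProbabilityTheory.IsFiniteKernel η] :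
    Measurable fun y => phiT t (κ y) (η y) := by
  have h : ∀ y, phiT t (κ y) (η y)
      = ∫ x, ((ProbabilityTheory.Kernel.rnDeriv κ η) y x).toReal ^ t ∂(η y) := by
    intro y
    refine integral_congr_ae ?_
    filter_upwards [ProbabilityTheory.Kernel.rnDeriv_eq_rnDeriv_measure (κ := κ) (η := η) (a := y)]
      with x hx
    rw [hx]
  simp_rw [h]
  have hF : StronglyMeasurable
      (fun p : ℝ × 𝒳 => ((ProbabilityTheory.Kernel.rnDeriv κ η) p.1 p.2).toReal ^ t) := by
    exact ((Real.continuous_rpow_const htt).measurable.comp ((ProbabilityTheory.Kernel.measurable_rnDeriv κ η).ennreal_toReal)).stronglyMeasurable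
  exact (hF.integral_kernel_prod_right' (κ := η)).measurable


/-- If for each `i` in a finite index set the Markov kernels `κ i` and `η i` from `[0,r]` to a
standard Borel space satisfy `κ i y ≠ η i y` for Lebesgue-a.e. `y ∈ [0,r]`, then for every
`ε > 0` there is `γ > 0` such that the union of the superlevel sets
`{y ∈ [0,r] : φ_t(κ i y, η i y) ≥ 1 - γ}` has Lebesgue measure less than `ε`. -/
theorem stmt_2 {𝒳 : Type*} [MeasurableSpace 𝒳] [StandardBorelSpace 𝒳]
    (r t : ℝ) (hr : 0 < r) (ht : t ∈ Set.Ioo (0 : ℝ) 1)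
    {I : Type*} [Fintype I]
    (κ η : I → ProbabilityTheory.Kernel ℝ 𝒳)
    [∀ i, ProbabilityTheory.IsMarkovKernel (κ i)]
    [∀ i, ProbabilityTheory.IsMarkovKernel (η i)]
    (hne : ∀ i, ∀ᵐ y ∂(volume.restrict (Set.Icc (0 : ℝ) r)), κ i y ≠ η i y) :
    ∀ ε : ℝ, 0 < ε → ∃ γ : ℝ, 0 < γ ∧
      volume (⋃ i, {y ∈ Set.Icc (0 : ℝ) r | 1 - γ ≤ phiT t (κ i y) (η i y)})
        < ENNReal.ofReal ε := by
  intro ε hε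
  have hg : ∀ i : I, Measurable fun y => phiT t (κ i y) (η i y) :=
    fun i => measurable_phiT ht.1.le (κ i) (η i)
  set S : ℕ → Set ℝ := fun n =>
    ⋃ i, {y ∈ Set.Icc (0 : ℝ) r | 1 - (1 / ((n : ℝ) + 1)) ≤ phiT t (κ i y) (η i y)} with hS_def
  have hS_meas : ∀ n, MeasurableSet (S n) := by
    intro n
    refine MeasurableSet.iUnion fun i => ?_
    exact measurableSet_Icc.inter (measurableSet_le measurable_const (hg i))
  have hS_sub : ∀ n, S n ⊆ Set.Icc (0 : ℝ) r := by
    intro n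
    exact Set.iUnion_subset fun i => Set.sep_subset _ _
  have hS_anti : Antitone S := by
    intro n m hnm
    refine Set.iUnion_mono fun i => ?_
    intro y hy
    refine ⟨hy.1, le_trans (by
      have : (1 : ℝ) / ((m : ℝ) + 1) ≤ 1 / ((n : ℝ) + 1) := by
        apply one_div_le_one_div_of_le (by positivity)
        exact_mod_cast by omega
      linarith) hy.2⟩
  have hfin : volume (S 0) ≠ ⊤ :=
    ne_top_of_le_ne_top (by simp : volume (Set.Icc (0:ℝ) r) ≠ ⊤) (measure_mono (hS_sub 0))
  have hinter : volume (⋂ n, S n) = 0 := by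
    refine measure_mono_null (t := ⋃ i, {y | κ i y = η i y} ∩ Set.Icc (0:ℝ) r) ?_ ?_
    · intro y hy
      simp only [Set.mem_iInter] at hy
      have h0 := hy 0
      rw [hS_def] at h0
      obtain ⟨i₀, hi₀⟩ := Set.mem_iUnion.mp h0
      have hyIcc : y ∈ Set.Icc (0:ℝ) r := hi₀.1
      by_contra hcon
      simp only [Set.mem_iUnion, not_exists, Set.mem_inter_iff, not_and] at hcon
      have hne' : ∀ i, κ i y ≠ η i y := fun i h => hcon i h hyIcc
      have hlt : ∀ i, phiT t (κ i y) (η i y) < 1 := fun i => phiT_lt_one ht _ _ (hne' i)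
      have hNe : Nonempty I := ⟨i₀⟩
      set c : ℝ := Finset.univ.sup' (Finset.univ_nonempty) (fun i => phiT t (κ i y) (η i y))
        with hc_def
      have hc_lt : c < 1 := by
        rw [hc_def, Finset.sup'_lt_iff]
        exact fun i _ => hlt i
      obtain ⟨n, hn⟩ := exists_nat_one_div_lt (by linarith : (0:ℝ) < 1 - c)
      have hyn := hy n
      rw [hS_def] at hyn
      obtain ⟨i, hi⟩ := Set.mem_iUnion.mp hyn
      have h1 : phiT t (κ i y) (η i y) ≤ c :=
        Finset.le_sup' (fun i => phiT t (κ i y) (η i y)) (Finset.mem_univ i)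
      have h2 : 1 - 1 / ((n:ℝ) + 1) ≤ c := le_trans hi.2 h1
      linarith
    · refine measure_iUnion_null fun i => ?_
      have h0 : (volume.restrict (Set.Icc (0:ℝ) r)) {y | κ i y = η i y} = 0 := by
        have := hne i
        rw [Filter.eventually_iff, mem_ae_iff] at this
        simpa [Set.compl_setOf] using this
      rwa [Measure.restrict_apply' measurableSet_Icc] at h0
  have htend : Filter.Tendsto (fun n => volume (S n)) Filter.atTop (nhds 0) := by
    have := tendsto_measure_iInter_atTop (μ := volume)
      (fun n => (hS_meas n).nullMeasurableSet) hS_anti ⟨0, hfin⟩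
    rwa [hinter] at this
  have hev : ∀ᶠ n in Filter.atTop, volume (S n) < ENNReal.ofReal ε := by
    exact htend.eventually_lt_const (by simpa using hε)
  obtain ⟨n, hn⟩ := hev.exists
  exact ⟨1 / ((n : ℝ) + 1), by positivity, hn⟩
end

section
/- Let (Ω, ℱ, ℙ) be a probability space, let (X_ℓ)_{ℓ≥1} be an i.i.d. sequence of real random variables, and let N : Ω → ℕ be a random variable independent of the whole sequence (X_ℓ)_{ℓ≥1}. Let c ∈ ℝ, κ ≥ 0, and M ∈ ℕ, and suppose that ℙ(Σ_{ℓ=1}^{m} X_ℓ ≥ c) ≥ e^{−κ·m} for every integer m ≥ M. Then ℙ(Σ_{ℓ=1}^{N} X_ℓ ≥ c) ≥ E[e^{−κ·N}] − ℙ(N < M). -/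
open MeasureTheory ProbabilityTheory

set_option maxHeartbeats 1000000 in
/-- Lower bound for a random sum (eq:0_is_FlipBad_simplified): if the i.i.d. partial sums
satisfy `ℙ(Σ_{ℓ<m} X ℓ ≥ c) ≥ e^{-κ m}` for all `m ≥ M`, and `N` is independent of the whole
sequence, then `ℙ(Σ_{ℓ<N} X ℓ ≥ c) ≥ E[e^{-κ N}] - ℙ(N < M)`. -/
theorem stmt_8 {Ω : Type*} [MeasurableSpace Ω] (P : Measure Ω) [IsProbabilityMeasure P]
    (X : ℕ → Ω → ℝ) (hX : ∀ ℓ, Measurable (X ℓ))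
    (hident : ∀ ℓ, IdentDistrib (X ℓ) (X 0) P P)
    (hiid : iIndepFun X P)
    (N : Ω → ℕ) (hN : Measurable N)
    (hNind : IndepFun N (fun ω i => X i ω) P)
    (c κ : ℝ) (hκ : 0 ≤ κ) (M : ℕ)
    (h : ∀ m : ℕ, M ≤ m →
      ENNReal.ofReal (Real.exp (-κ * m)) ≤ P {ω | c ≤ ∑ ℓ ∈ Finset.range m, X ℓ ω}) :
    (∫⁻ ω, ENNReal.ofReal (Real.exp (-κ * N ω)) ∂P) - P {ω | N ω < M}
      ≤ P {ω | c ≤ ∑ ℓ ∈ Finset.range (N ω), X ℓ ω} := by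
  classical
  have hSm : ∀ m : ℕ, Measurable (fun ω => ∑ ℓ ∈ Finset.range m, X ℓ ω) :=
    fun m => Finset.measurable_sum _ fun ℓ _ => hX ℓ
  -- independence of {N = m} and {c ≤ S m}
  have hind : ∀ m : ℕ, P (N ⁻¹' {m} ∩ {ω | c ≤ ∑ ℓ ∈ Finset.range m, X ℓ ω})
      = P (N ⁻¹' {m}) * P {ω | c ≤ ∑ ℓ ∈ Finset.range m, X ℓ ω} := by
    intro m
    have hg : Measurable (fun f : ℕ → ℝ => ∑ ℓ ∈ Finset.range m, f ℓ) :=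
      Finset.measurable_sum _ fun ℓ _ => measurable_pi_apply ℓ
    have h2 : IndepFun N (fun ω => ∑ ℓ ∈ Finset.range m, X ℓ ω) P :=
      hNind.comp measurable_id hg
    have := h2.measure_inter_preimage_eq_mul {m} (Set.Ici c)
      (measurableSet_singleton m) measurableSet_Ici
    simpa [Set.preimage, Set.mem_Ici] using this
  -- the events A m
  set A : ℕ → Set Ω := fun m => N ⁻¹' {m} ∩ {ω | c ≤ ∑ ℓ ∈ Finset.range m, X ℓ ω} with hA
  have hAm : ∀ m, MeasurableSet (A m) := fun m =>
    (hN (measurableSet_singleton m)).inter (measurableSet_le measurable_const (hSm m))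
  have hAdisj : Pairwise (Function.onFun Disjoint A) := by
    intro i j hij
    refine Set.disjoint_left.mpr ?_
    rintro ω ⟨hi, -⟩ ⟨hj, -⟩
    exact hij (hi.symm.trans hj)
  have hT : {ω | c ≤ ∑ ℓ ∈ Finset.range (N ω), X ℓ ω} = ⋃ m, A m := by
    ext ω
    simp only [Set.mem_iUnion, hA, Set.mem_inter_iff, Set.mem_preimage, Set.mem_singleton_iff,
      Set.mem_setOf_eq]
    constructor
    · intro hω; exact ⟨N ω, rfl, hω⟩
    · rintro ⟨m, rfl, hω⟩; exact hω
  have hTsum : P {ω | c ≤ ∑ ℓ ∈ Finset.range (N ω), X ℓ ω} = ∑' m, P (A m) := by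
    rw [hT, measure_iUnion hAdisj hAm]
  -- the integral as a sum
  have hint : (∫⁻ ω, ENNReal.ofReal (Real.exp (-κ * N ω)) ∂P)
      = ∑' m : ℕ, ENNReal.ofReal (Real.exp (-κ * m)) * P (N ⁻¹' {m}) := by
    have hmeas : Measurable (fun n : ℕ => ENNReal.ofReal (Real.exp (-κ * n))) :=
      measurable_of_countable _
    rw [← lintegral_map hmeas hN, lintegral_countable']
    congr 1
    ext m
    rw [Measure.map_apply hN (measurableSet_singleton m)]
  -- P (N < M) as a sum over range M
  have hdisjN : Set.PairwiseDisjoint (↑(Finset.range M)) (fun m => N ⁻¹' {m}) := by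
    intro i _ j _ hij
    refine Set.disjoint_left.mpr ?_
    intro ω hi hj
    simp only [Set.mem_preimage, Set.mem_singleton_iff] at hi hj
    exact hij (hi.symm.trans hj)
  have hNM : ∑ m ∈ Finset.range M, P (N ⁻¹' {m}) = P {ω | N ω < M} := by
    rw [← measure_biUnion_finset hdisjN (fun m _ => hN (measurableSet_singleton m))]
    congr 1
    ext ω
    simp only [Set.mem_iUnion, Finset.mem_range, Set.mem_preimage, Set.mem_singleton_iff,
      Set.mem_setOf_eq]
    exact ⟨fun ⟨m, hm, he⟩ => he ▸ hm, fun hω => ⟨N ω, hω, rfl⟩⟩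
  -- main chain
  rw [tsub_le_iff_right, hint, hTsum, ← hNM]
  have hbound : ∀ m : ℕ, ENNReal.ofReal (Real.exp (-κ * m)) * P (N ⁻¹' {m})
      ≤ P (A m) + Set.indicator (↑(Finset.range M)) (fun k => P (N ⁻¹' {k})) m := by
    intro m
    by_cases hm : m < M
    · calc ENNReal.ofReal (Real.exp (-κ * m)) * P (N ⁻¹' {m})
          ≤ P (N ⁻¹' {m}) := by
            refine mul_le_of_le_one_left zero_le ?_
            rw [← ENNReal.ofReal_one]
            refine ENNReal.ofReal_le_ofReal ?_
            rw [← Real.exp_zero]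
            apply Real.exp_le_exp.mpr
            have : (0:ℝ) ≤ κ * m := mul_nonneg hκ (Nat.cast_nonneg m)
            linarith
        _ = Set.indicator (↑(Finset.range M)) (fun k => P (N ⁻¹' {k})) m := by
            rw [Set.indicator_of_mem (by simpa using hm)]
        _ ≤ P (A m) + Set.indicator (↑(Finset.range M)) (fun k => P (N ⁻¹' {k})) m :=
            le_add_self
    · calc ENNReal.ofReal (Real.exp (-κ * m)) * P (N ⁻¹' {m})
          ≤ P (A m) := by
            rw [hA, hind m, mul_comm]
            exact mul_le_mul_right (h m (le_of_not_gt hm)) _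
        _ ≤ P (A m) + _ := le_self_add
  calc ∑' m : ℕ, ENNReal.ofReal (Real.exp (-κ * m)) * P (N ⁻¹' {m})
      ≤ ∑' m : ℕ, (P (A m) + Set.indicator (↑(Finset.range M)) (fun k => P (N ⁻¹' {k})) m) :=
        ENNReal.tsum_le_tsum hbound
    _ = (∑' m : ℕ, P (A m))
        + ∑' m : ℕ, Set.indicator (↑(Finset.range M)) (fun k => P (N ⁻¹' {k})) m :=
        ENNReal.tsum_add
    _ = (∑' m : ℕ, P (A m)) + ∑ m ∈ Finset.range M, P (N ⁻¹' {m}) := by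
        congr 1
        rw [tsum_eq_sum (s := Finset.range M)
          (fun b hb => Set.indicator_of_notMem (by simpa using hb) _)]
        exact Finset.sum_congr rfl fun m hm => Set.indicator_of_mem (by simpa using hm) _
end

section
/- Let a ≥ 1, κ > 0, and β ∈ (0, 1/2) satisfy a·(1 − e^{−κ}) ≤ 1 − 2β. Let (X_ℓ)_{ℓ≥1} be an i.i.d. sequence of real random variables, let c ∈ ℝ, and let M ∈ ℕ be such that ℙ(Σ_{ℓ=1}^{m} X_ℓ ≥ c) ≥ e^{−κ·m} for every integer m ≥ M. For each L > 0 let N_L be a random variable with distribution Pois(a·L), independent of the sequence (X_ℓ)_{ℓ≥1}. Then there exists L₀ > 0 such that for all L ≥ L₀, ℙ(Σ_{ℓ=1}^{N_L} X_ℓ ≥ c) ≥ e^{(−1+β)·L}. -/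
open MeasureTheory ProbabilityTheory

/-- Probabilistic core of Lemma `impossibility_lemma_1`: under `a (1 - e^{-κ}) ≤ 1 - 2β` with
`a ≥ 1`, `κ > 0`, `β ∈ (0, 1/2)`, a Cramér-type lower bound `ℙ(Σ_{ℓ<m} X ℓ ≥ c) ≥ e^{-κ m}`
for `m ≥ M`, and `N L ~ Pois(a L)` independent of the sequence, there is `L₀ > 0` such that
`ℙ(Σ_{ℓ < N L} X ℓ ≥ c) ≥ e^{(-1+β) L}` for all `L ≥ L₀`. -/
theorem stmt_9 {Ω : Type*} [MeasurableSpace Ω] (P : Measure Ω) [IsProbabilityMeasure P]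
    (a κ β : ℝ) (ha : 1 ≤ a) (hκ : 0 < κ) (hβ : β ∈ Set.Ioo (0 : ℝ) (1 / 2))
    (hcond : a * (1 - Real.exp (-κ)) ≤ 1 - 2 * β)
    (X : ℕ → Ω → ℝ) (hX : ∀ ℓ, Measurable (X ℓ))
    (hident : ∀ ℓ, IdentDistrib (X ℓ) (X 0) P P)
    (hiid : iIndepFun X P)
    (c : ℝ) (M : ℕ)
    (h : ∀ m : ℕ, M ≤ m →
      ENNReal.ofReal (Real.exp (-κ * m)) ≤ P {ω | c ≤ ∑ ℓ ∈ Finset.range m, X ℓ ω})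
    (N : ℝ → Ω → ℕ) (hN : ∀ L, Measurable (N L))
    (hNlaw : ∀ L : ℝ, 0 < L → Measure.map (N L) P = poissonMeasure (a * L).toNNReal)
    (hNind : ∀ L : ℝ, 0 < L → IndepFun (N L) (fun ω i => X i ω) P) :
    ∃ L₀ : ℝ, 0 < L₀ ∧ ∀ L : ℝ, L₀ ≤ L →
      ENNReal.ofReal (Real.exp ((-1 + β) * L))
        ≤ P {ω | c ≤ ∑ ℓ ∈ Finset.range (N L ω), X ℓ ω} := by
  obtain ⟨hβ0, hβ2⟩ := hβ
  -- eventual analytic facts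
  have hβL : Filter.Tendsto (fun L : ℝ => β * L) Filter.atTop Filter.atTop :=
    Filter.Tendsto.const_mul_atTop hβ0 Filter.tendsto_id
  have htend0 : Filter.Tendsto
      (fun L : ℝ => (M : ℝ) * a ^ M * β⁻¹ ^ M * ((β * L) ^ M * Real.exp (-(β * L))))
      Filter.atTop (nhds 0) := by
    have h1 := (Real.tendsto_pow_mul_exp_neg_atTop_nhds_zero M).comp hβL
    have := h1.const_mul ((M : ℝ) * a ^ M * β⁻¹ ^ M)
    simpa using this
  have hE1 : ∀ᶠ L : ℝ in Filter.atTop,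
      (M : ℝ) * a ^ M * β⁻¹ ^ M * ((β * L) ^ M * Real.exp (-(β * L))) ≤ 1 :=
    htend0.eventually (eventually_le_nhds one_pos)
  have hE2 : ∀ᶠ L : ℝ in Filter.atTop, (2 : ℝ) ≤ Real.exp (β * L) :=
    (Real.tendsto_exp_atTop.comp hβL).eventually_ge_atTop 2
  have hEv := (hE1.and hE2).and (Filter.eventually_ge_atTop (1 : ℝ))
  obtain ⟨L₀', hL₀'⟩ := Filter.eventually_atTop.mp hEv
  refine ⟨max L₀' 1, lt_of_lt_of_le one_pos (le_max_right _ _), ?_⟩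
  intro L hL
  obtain ⟨⟨hE1L, hE2L⟩, hL1⟩ := hL₀' L (le_trans (le_max_left _ _) hL)
  have hL0 : (0 : ℝ) < L := lt_of_lt_of_le one_pos hL1
  -- notation
  set μr : ℝ := a * L with hμr
  have hμr1 : (1 : ℝ) ≤ μr := by nlinarith
  have hμr0 : (0 : ℝ) < μr := lt_of_lt_of_le one_pos hμr1
  have hcoe : ((a * L).toNNReal : ℝ) = μr := Real.coe_toNNReal _ (le_of_lt hμr0)
  set q : ℝ := 1 - Real.exp (-κ) with hqdef
  have hq0 : 0 < q := by
    have : Real.exp (-κ) < 1 := Real.exp_lt_one_iff.mpr (neg_lt_zero.mpr hκ)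
    simp only [hqdef]; linarith
  -- the real series
  set g : ℕ → ℝ := fun m => poissonPMFReal (a * L).toNNReal m * Real.exp (-κ * m) with hg
  have hgnn : ∀ m, 0 ≤ g m := fun m =>
    mul_nonneg poissonPMFReal_nonneg (Real.exp_nonneg _)
  have hgsum : HasSum g (Real.exp (-(μr * q))) := by
    have hexp : HasSum (fun m : ℕ => (μr * Real.exp (-κ)) ^ m / m.factorial)
        (Real.exp (μr * Real.exp (-κ))) := by
      rw [Real.exp_eq_exp_ℝ]
      exact NormedSpace.expSeries_div_hasSum_exp _
    have h2 := hexp.mul_left (Real.exp (-μr))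
    have hfun : (fun m : ℕ => Real.exp (-μr) * ((μr * Real.exp (-κ)) ^ m / m.factorial)) = g := by
      funext m
      simp only [hg, poissonPMFReal, hcoe]
      rw [show -κ * (m : ℝ) = (m : ℝ) * (-κ) by ring, Real.exp_nat_mul, mul_pow]
      ring
    have hval : Real.exp (-μr) * Real.exp (μr * Real.exp (-κ)) = Real.exp (-(μr * q)) := by
      rw [← Real.exp_add]; congr 1; simp only [hqdef]; ring
    rwa [hfun, hval] at h2
  -- prefix bound
  have hprefix : ∑ m ∈ Finset.range M, g m ≤ Real.exp (-L) * ((M : ℝ) * μr ^ M) := by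
    have hterm : ∀ m ∈ Finset.range M, g m ≤ Real.exp (-L) * μr ^ M := by
      intro m hm
      have hm' : m ≤ M := le_of_lt (Finset.mem_range.mp hm)
      have h1 : poissonPMFReal (a * L).toNNReal m ≤ Real.exp (-L) * μr ^ M := by
        simp only [poissonPMFReal, hcoe]
        have hfac : (1 : ℝ) ≤ (m.factorial : ℝ) := by
          exact_mod_cast Nat.one_le_iff_ne_zero.mpr m.factorial_ne_zero
        have hpow : μr ^ m ≤ μr ^ M := pow_le_pow_right₀ hμr1 hm'
        have hexp : Real.exp (-μr) ≤ Real.exp (-L) := by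
          apply Real.exp_le_exp.mpr; simp only [neg_le_neg_iff]; nlinarith
        calc Real.exp (-μr) * μr ^ m / (m.factorial : ℝ)
            ≤ Real.exp (-μr) * μr ^ m / 1 := by
              apply div_le_div_of_nonneg_left _ one_pos hfac
              positivity
          _ = Real.exp (-μr) * μr ^ m := by ring
          _ ≤ Real.exp (-L) * μr ^ M := by
              apply mul_le_mul hexp hpow (by positivity) (Real.exp_nonneg _)
      have h2 : Real.exp (-κ * m) ≤ 1 := by
        apply Real.exp_le_one_iff.mpr
        simp only [neg_mul, neg_nonpos]
        positivity
      calc g m ≤ poissonPMFReal (a * L).toNNReal m * 1 :=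
            mul_le_mul_of_nonneg_left h2 poissonPMFReal_nonneg
        _ = poissonPMFReal (a * L).toNNReal m := mul_one _
        _ ≤ Real.exp (-L) * μr ^ M := h1
    calc ∑ m ∈ Finset.range M, g m ≤ ∑ _m ∈ Finset.range M, Real.exp (-L) * μr ^ M :=
          Finset.sum_le_sum hterm
      _ = (M : ℝ) * (Real.exp (-L) * μr ^ M) := by
          rw [Finset.sum_const, Finset.card_range]; ring
      _ = Real.exp (-L) * ((M : ℝ) * μr ^ M) := by ring
  -- key real inequality
  have hkey : Real.exp ((-1 + β) * L) ≤ ∑' k, g (k + M) := by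
    have hshift : (∑ m ∈ Finset.range M, g m) + ∑' k, g (k + M) = Real.exp (-(μr * q)) := by
      rw [Summable.sum_add_tsum_nat_add M hgsum.summable, hgsum.tsum_eq]
    have hmain : Real.exp ((-1 + β) * L) + Real.exp (-L) * ((M : ℝ) * μr ^ M)
        ≤ Real.exp (-(μr * q)) := by
      have hstep1 : Real.exp (-L) * ((M : ℝ) * μr ^ M)
          ≤ Real.exp ((-1 + β) * L) * (Real.exp (β * L) - 1) := by
        have heq : Real.exp (-L) * ((M : ℝ) * μr ^ M)
            = ((M : ℝ) * a ^ M * β⁻¹ ^ M * ((β * L) ^ M * Real.exp (-(β * L))))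
              * Real.exp ((-1 + β) * L) := by
          have hE : Real.exp (-L) = Real.exp (-(β * L)) * Real.exp ((-1 + β) * L) := by
            rw [← Real.exp_add]; ring_nf
          rw [hμr, mul_pow, hE]
          field_simp
          rw [mul_assoc, ← mul_pow, one_div, inv_mul_cancel_left₀ hβ0.ne']
        calc Real.exp (-L) * ((M : ℝ) * μr ^ M)
            = ((M : ℝ) * a ^ M * β⁻¹ ^ M * ((β * L) ^ M * Real.exp (-(β * L))))
              * Real.exp ((-1 + β) * L) := heq
          _ ≤ 1 * Real.exp ((-1 + β) * L) :=
              mul_le_mul_of_nonneg_right hE1L (Real.exp_nonneg _)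
          _ = Real.exp ((-1 + β) * L) := one_mul _
          _ ≤ Real.exp ((-1 + β) * L) * (Real.exp (β * L) - 1) := by
              nlinarith [Real.exp_pos ((-1 + β) * L)]
      have hstep2 : Real.exp ((-1 + β) * L) + Real.exp ((-1 + β) * L) * (Real.exp (β * L) - 1)
          ≤ Real.exp (-(μr * q)) := by
        have : Real.exp ((-1 + β) * L) + Real.exp ((-1 + β) * L) * (Real.exp (β * L) - 1)
            = Real.exp ((-1 + 2 * β) * L) := by
          have : Real.exp ((-1 + β) * L) * Real.exp (β * L) = Real.exp ((-1 + 2 * β) * L) := by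
            rw [← Real.exp_add]; ring_nf
          nlinarith [this]
        rw [this]
        apply Real.exp_le_exp.mpr
        have : μr * q ≤ (1 - 2 * β) * L := by
          have := mul_le_mul_of_nonneg_right hcond (le_of_lt hL0)
          calc μr * q = a * (1 - Real.exp (-κ)) * L := by rw [hμr, hqdef]; ring
            _ ≤ (1 - 2 * β) * L := this
        linarith
      linarith
    have hprefix' : (∑ m ∈ Finset.range M, g m) ≤ Real.exp (-L) * ((M : ℝ) * μr ^ M) := hprefix
    linarith
  -- measure theory part
  set S : ℕ → Set Ω := fun m => {ω | c ≤ ∑ ℓ ∈ Finset.range m, X ℓ ω} with hS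
  have hSmeas : ∀ m, MeasurableSet (S m) := fun m =>
    measurableSet_le measurable_const (Finset.measurable_sum _ fun i _ => hX i)
  set A : ℕ → Set Ω := fun m => (N L) ⁻¹' {m} ∩ S m with hA
  have hAmeas : ∀ m, MeasurableSet (A m) := fun m =>
    ((hN L) (measurableSet_singleton m)).inter (hSmeas m)
  have hdisj : Pairwise (Function.onFun Disjoint A) := by
    intro m n hmn
    simp only [Function.onFun, hA]
    rw [Set.disjoint_left]
    rintro ω ⟨h1, -⟩ ⟨h2, -⟩
    exact hmn (h1.symm.trans h2)
  have hsub : (⋃ m, A m) ⊆ {ω | c ≤ ∑ ℓ ∈ Finset.range (N L ω), X ℓ ω} := by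
    rintro ω hω
    obtain ⟨m, hm⟩ := Set.mem_iUnion.mp hω
    obtain ⟨h1, h2⟩ := hm
    have : N L ω = m := h1
    show c ≤ _; rw [this]; exact h2
  -- P(A m) = P(N = m) * P(S m)
  have hAeq : ∀ m, P (A m) = P ((N L) ⁻¹' {m}) * P (S m) := by
    intro m
    have hTmeas : MeasurableSet {y : ℕ → ℝ | c ≤ ∑ ℓ ∈ Finset.range m, y ℓ} :=
      measurableSet_le measurable_const (Finset.measurable_sum _ fun i _ => measurable_pi_apply i)
    have := (hNind L hL0).measure_inter_preimage_eq_mul {m} _ (measurableSet_singleton m) hTmeas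
    convert this using 3
    all_goals rfl
  have hNpmf : ∀ m, P ((N L) ⁻¹' {m}) = ENNReal.ofReal (poissonPMFReal (a * L).toNNReal m) := by
    intro m
    rw [← Measure.map_apply (hN L) (measurableSet_singleton m), hNlaw L hL0]
    rw [poissonMeasure_singleton]
    rfl
  have hAbound : ∀ k : ℕ, ENNReal.ofReal (g (k + M)) ≤ P (A (k + M)) := by
    intro k
    rw [hAeq, hNpmf]
    have := h (k + M) (Nat.le_add_left M k)
    calc ENNReal.ofReal (g (k + M))
        = ENNReal.ofReal (poissonPMFReal (a * L).toNNReal (k + M))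
          * ENNReal.ofReal (Real.exp (-κ * (k + M))) := by
          rw [← ENNReal.ofReal_mul poissonPMFReal_nonneg]
          simp [hg]
      _ ≤ ENNReal.ofReal (poissonPMFReal (a * L).toNNReal (k + M)) * P (S (k + M)) := by
          apply mul_le_mul_right (le_trans (le_of_eq (by push_cast; ring_nf)) this)
  -- chain of inequalities
  calc ENNReal.ofReal (Real.exp ((-1 + β) * L))
      ≤ ENNReal.ofReal (∑' k, g (k + M)) := ENNReal.ofReal_le_ofReal hkey
    _ = ∑' k, ENNReal.ofReal (g (k + M)) := by
        apply ENNReal.ofReal_tsum_of_nonneg (fun k => hgnn _)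
        exact (summable_nat_add_iff M).mpr hgsum.summable
    _ ≤ ∑' k, P (A (k + M)) := ENNReal.tsum_le_tsum hAbound
    _ ≤ ∑' m, P (A m) :=
        ENNReal.tsum_comp_le_tsum_of_injective (add_left_injective M) _
    _ = P (⋃ m, A m) := (measure_iUnion hdisj hAmeas).symm
    _ ≤ P {ω | c ≤ ∑ ℓ ∈ Finset.range (N L ω), X ℓ ω} := measure_mono hsub
end
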